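/- For every m ≥ 1 and every n ≥ 2, the power sum ∑_{j=2}^{n} m(j)^m of the Jucys–Murphy elements lies in the center of the group algebra ℂ[Sₙ]. -/

import Mathlib

/-- The Jucys–Murphy element `m(j) = ∑_{i=1}^{j-1} (i j)` in the group algebra
`ℂ[Sₙ]`, where positions are numbered `1, …, n` (position `p` corresponds to
`p - 1 : Fin n`).  For `j` out of the range `1 ≤ j ≤ n` we set it to `0`. -/
noncomputable def jucysMurphy (n j : ℕ) : MonoidAlgebra ℂ (Equiv.Perm (Fin n)) :=
  if h : 1 ≤ j ∧ j ≤ n then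
    ∑ i ∈ Finset.univ.filter (fun i : Fin n => (i : ℕ) + 1 < j),
      MonoidAlgebra.of ℂ (Equiv.Perm (Fin n)) (Equiv.swap i ⟨j - 1, by omega⟩)
  else 0

open Finset Equiv

lemma pow_rel {R : Type*} [Ring R] (s x y c : R)
    (h : s * x = y * s + c) (m : ℕ) :
    s * x ^ m = y ^ m * s + ∑ i ∈ Finset.range m, y ^ i * c * x ^ (m - 1 - i) := by
  induction m with
  | zero => simp
  | succ m ih =>
    have hsum : (∑ i ∈ Finset.range (m+1), y ^ i * c * x ^ (m + 1 - 1 - i))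
        = (∑ i ∈ Finset.range m, y * (y ^ i * c * x ^ (m - 1 - i))) + c * x ^ m := by
      rw [Finset.sum_range_succ']
      simp only [pow_zero, one_mul, Nat.add_sub_cancel]
      congr 1
      refine Finset.sum_congr rfl fun i hi => ?_
      have he : m - (i+1) = m - 1 - i := by omega
      rw [he, pow_succ']; noncomm_ring
    rw [hsum, pow_succ' x m, ← mul_assoc, h, add_mul, mul_assoc, ih, mul_add,
      Finset.mul_sum, ← mul_assoc, ← pow_succ']
    abel

lemma central_pair {R : Type*} [Ring R] (s a b : R)
    (h1 : s * a = b * s - 1) (h2 : s * b = a * s + 1) (hab : Commute a b) (m : ℕ) :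
    s * (a ^ m + b ^ m) = (a ^ m + b ^ m) * s := by
  have e1 := pow_rel s a b (-1) (by rw [h1, sub_eq_add_neg]) m
  have e2 := pow_rel s b a 1 h2 m
  have key : (∑ i ∈ Finset.range m, b ^ i * (-1) * a ^ (m-1-i))
      + (∑ i ∈ Finset.range m, a ^ i * 1 * b ^ (m-1-i)) = 0 := by
    have h3 : (∑ i ∈ Finset.range m, a ^ i * 1 * b ^ (m-1-i))
        = ∑ i ∈ Finset.range m, b ^ i * a ^ (m-1-i) := by
      rw [← Finset.sum_range_reflect]
      refine Finset.sum_congr rfl fun i hi => ?_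
      rw [Finset.mem_range] at hi
      have he : m - 1 - (m - 1 - i) = i := by omega
      rw [he, mul_one]
      exact ((hab.symm).pow_pow i (m-1-i)).eq.symm
    rw [h3, ← Finset.sum_add_distrib]
    apply Finset.sum_eq_zero
    intro i hi
    simp [mul_neg_one, neg_mul]
  rw [mul_add, e1, e2, add_add_add_comm, key, add_zero, add_mul, add_comm (b^m*s)]


variable {α : Type*} [DecidableEq α]

variable {α : Type*} [DecidableEq α]

-- I1 : swap y z * swap x y = swap x z * swap y z
lemma swapI1 {x y z : α} (hxy : x ≠ y) (hxz : x ≠ z) (hyz : y ≠ z) :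
    Equiv.swap y z * Equiv.swap x y = Equiv.swap x z * Equiv.swap y z := by
  ext w
  simp only [Equiv.Perm.mul_apply, Equiv.swap_apply_def]
  split_ifs <;> simp_all

-- I2 : swap x y * swap y z = swap x z * swap x y
lemma swapI2 {x y z : α} (hxy : x ≠ y) (hxz : x ≠ z) (hyz : y ≠ z) :
    Equiv.swap x y * Equiv.swap y z = Equiv.swap x z * Equiv.swap x y := by
  ext w
  simp only [Equiv.Perm.mul_apply, Equiv.swap_apply_def]
  split_ifs <;> simp_all

-- I3 : swap x y * swap x z = swap y z * swap x y
lemma swapI3 {x y z : α} (hxy : x ≠ y) (hxz : x ≠ z) (hyz : y ≠ z) :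
    Equiv.swap x y * Equiv.swap x z = Equiv.swap y z * Equiv.swap x y := by
  ext w
  simp only [Equiv.Perm.mul_apply, Equiv.swap_apply_def]
  split_ifs <;> simp_all

-- I5 : swap y z * swap x z = swap x y * swap y z
lemma swapI5 {x y z : α} (hxy : x ≠ y) (hxz : x ≠ z) (hyz : y ≠ z) :
    Equiv.swap y z * Equiv.swap x z = Equiv.swap x y * Equiv.swap y z := by
  ext w
  simp only [Equiv.Perm.mul_apply, Equiv.swap_apply_def]
  split_ifs <;> simp_all

lemma swap_comm_of_ne {x y u v : α} (h1 : x ≠ u) (h2 : x ≠ v) (h3 : y ≠ u) (h4 : y ≠ v) :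
    Equiv.swap x y * Equiv.swap u v = Equiv.swap u v * Equiv.swap x y := by
  have hd : (Equiv.swap x y).Disjoint (Equiv.swap u v) := by
    intro w
    rcases eq_or_ne w x with rfl | hwx
    · exact Or.inr (Equiv.swap_apply_of_ne_of_ne h1 h2)
    rcases eq_or_ne w y with rfl | hwy
    · exact Or.inr (Equiv.swap_apply_of_ne_of_ne h3 h4)
    · exact Or.inl (Equiv.swap_apply_of_ne_of_ne hwx hwy)
  exact hd.commute.eq


lemma jm_eq (n j : ℕ) (h1 : 1 ≤ j) (h2 : j ≤ n) :
    jucysMurphy n j = ∑ i ∈ Finset.univ.filter (fun i : Fin n => (i : ℕ) + 1 < j),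
      MonoidAlgebra.of ℂ (Equiv.Perm (Fin n)) (Equiv.swap i ⟨j - 1, by omega⟩) := by
  rw [jucysMurphy, dif_pos ⟨h1, h2⟩]

lemma jm_succ (n t : ℕ) (ht : t + 1 ≤ n) :
    jucysMurphy n (t + 1) = ∑ i ∈ Finset.univ.filter (fun i : Fin n => (i : ℕ) < t),
      MonoidAlgebra.of ℂ (Equiv.Perm (Fin n)) (Equiv.swap i ⟨t, by omega⟩) := by
  rw [jm_eq n (t+1) (by omega) ht]
  simp only [Nat.add_sub_cancel, Nat.add_lt_add_iff_right]

noncomputable def ε (n : ℕ) : Equiv.Perm (Fin n) →* MonoidAlgebra ℂ (Equiv.Perm (Fin n)) :=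
  MonoidAlgebra.of ℂ (Equiv.Perm (Fin n))

lemma jm_succ' (n t : ℕ) (ht : t + 1 ≤ n) :
    jucysMurphy n (t + 1) = ∑ i ∈ Finset.univ.filter (fun i : Fin n => (i : ℕ) < t),
      ε n (Equiv.swap i ⟨t, by omega⟩) := jm_succ n t ht

lemma filter_succ (n t : ℕ) (ht : t < n) :
    Finset.univ.filter (fun i : Fin n => (i : ℕ) < t + 1)
      = insert (⟨t, ht⟩ : Fin n) (Finset.univ.filter (fun i : Fin n => (i : ℕ) < t)) := by
  ext i
  simp [Fin.ext_iff]
  omega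

lemma jm_rel1 (n t : ℕ) (ht : t + 1 < n) (p : t < n) :
    ε n (Equiv.swap ⟨t, p⟩ ⟨t+1, ht⟩) * jucysMurphy n (t+1)
      = jucysMurphy n (t+2) * ε n (Equiv.swap ⟨t, p⟩ ⟨t+1, ht⟩) - 1 := by
  rw [jm_succ' n t (by omega), show t+2 = (t+1)+1 from rfl, jm_succ' n (t+1) ht,
    Finset.mul_sum, Finset.sum_mul, filter_succ n t (by omega),
    Finset.sum_insert (by simp)]
  rw [← map_mul, Equiv.swap_mul_self, map_one, add_sub_cancel_left]
  refine Finset.sum_congr rfl fun i hi => ?_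
  rw [Finset.mem_filter] at hi
  have hi2 : (i : ℕ) < t := hi.2
  rw [← map_mul, ← map_mul]
  congr 1
  exact swapI1 (by simp [Fin.ext_iff]; try omega) (by simp [Fin.ext_iff]; try omega)
    (by simp [Fin.ext_iff]; try omega)

lemma jm_rel2 (n t : ℕ) (ht : t + 1 < n) (p : t < n) :
    ε n (Equiv.swap ⟨t, p⟩ ⟨t+1, ht⟩) * jucysMurphy n (t+2)
      = jucysMurphy n (t+1) * ε n (Equiv.swap ⟨t, p⟩ ⟨t+1, ht⟩) + 1 := by
  rw [jm_succ' n t (by omega), show t+2 = (t+1)+1 from rfl, jm_succ' n (t+1) ht,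
    Finset.mul_sum, Finset.sum_mul, filter_succ n t (by omega),
    Finset.sum_insert (by simp)]
  rw [← map_mul, Equiv.swap_mul_self, map_one, add_comm]
  congr 1
  refine Finset.sum_congr rfl fun i hi => ?_
  rw [Finset.mem_filter] at hi
  have hi2 : (i : ℕ) < t := hi.2
  rw [← map_mul, ← map_mul]
  congr 1
  exact swapI5 (by simp [Fin.ext_iff]; try omega) (by simp [Fin.ext_iff]; try omega)
    (by simp [Fin.ext_iff]; try omega)

lemma jm_comm (n t : ℕ) (ht : t + 1 < n) :
    jucysMurphy n (t+1) * jucysMurphy n (t+2)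
      = jucysMurphy n (t+2) * jucysMurphy n (t+1) := by
  have hK : t < n := by omega
  set K : Fin n := ⟨t, hK⟩ with hKdef
  set K' : Fin n := ⟨t+1, ht⟩ with hK'def
  rw [jm_succ' n t (by omega), show t+2 = (t+1)+1 from rfl, jm_succ' n (t+1) ht]
  rw [Finset.sum_mul_sum, Finset.sum_mul_sum, Finset.sum_comm]
  rw [← sub_eq_zero, ← Finset.sum_sub_distrib]
  simp only [← Finset.sum_sub_distrib]
  rw [Finset.sum_comm]
  simp only [← map_mul]
  apply Finset.sum_eq_zero
  intro i hi
  rw [Finset.mem_filter] at hi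
  have hi2 : (i : ℕ) < t := hi.2
  have hiK : i ≠ K := by simp [hKdef, Fin.ext_iff]; omega
  have hiK' : i ≠ K' := by simp [hK'def, Fin.ext_iff]; omega
  have hKK' : K ≠ K' := by simp [hKdef, hK'def, Fin.ext_iff]
  have hsub : ({i, K} : Finset (Fin n)) ⊆
      Finset.univ.filter (fun l : Fin n => (l : ℕ) < t + 1) := by
    intro l hl
    rcases Finset.mem_insert.1 hl with rfl | hl
    · simp; omega
    · rw [Finset.mem_singleton] at hl; subst hl; simp [hKdef]
  have hz : ∀ l ∈ Finset.univ.filter (fun l : Fin n => (l : ℕ) < t + 1),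
      l ∉ ({i, K} : Finset (Fin n)) →
      ε n (Equiv.swap i K * Equiv.swap l K') - ε n (Equiv.swap l K' * Equiv.swap i K) = 0 := by
    intro l hl hl'
    rw [Finset.mem_filter] at hl
    rw [Finset.mem_insert, Finset.mem_singleton] at hl'
    push_neg at hl'
    have hcomm : Equiv.swap i K * Equiv.swap l K' = Equiv.swap l K' * Equiv.swap i K := by
      refine swap_comm_of_ne (Ne.symm hl'.1) hiK' ?_ hKK'
      exact fun h => hl'.2 h.symm
    rw [hcomm, sub_self]
  rw [show (∑ l ∈ Finset.univ.filter (fun l : Fin n => (l : ℕ) < t + 1),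
      (ε n (Equiv.swap i K * Equiv.swap l K') - ε n (Equiv.swap l K' * Equiv.swap i K)))
      = ∑ l ∈ ({i, K} : Finset (Fin n)),
      (ε n (Equiv.swap i K * Equiv.swap l K') - ε n (Equiv.swap l K' * Equiv.swap i K)) from
    (Finset.sum_subset hsub hz).symm]
  rw [Finset.sum_pair hiK]
  have e1 : Equiv.swap i K * Equiv.swap i K' = Equiv.swap K K' * Equiv.swap i K :=
    swapI3 hiK hiK' hKK'
  have e2 : Equiv.swap i K' * Equiv.swap i K = Equiv.swap i K * Equiv.swap K K' :=
    (swapI2 hiK hiK' hKK').symm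
  rw [e1, e2]
  abel

lemma jm_other (n t j : ℕ) (ht : t + 1 < n) (p : t < n) (hj1 : 1 ≤ j) (hjn : j ≤ n)
    (hne1 : j ≠ t + 1) (hne2 : j ≠ t + 2) :
    ε n (Equiv.swap ⟨t, p⟩ ⟨t+1, ht⟩) * jucysMurphy n j
      = jucysMurphy n j * ε n (Equiv.swap ⟨t, p⟩ ⟨t+1, ht⟩) := by
  have hK : t < n := by omega
  set K : Fin n := ⟨t, hK⟩ with hKdef
  set K' : Fin n := ⟨t+1, ht⟩ with hK'def
  have hA : j - 1 < n := by omega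
  rw [show jucysMurphy n j = ∑ i ∈ Finset.univ.filter (fun i : Fin n => (i : ℕ) + 1 < j),
      ε n (Equiv.swap i ⟨j - 1, hA⟩) from jm_eq n j hj1 hjn]
  rw [Finset.mul_sum, Finset.sum_mul]
  rcases (by omega : j ≤ t ∨ t + 3 ≤ j) with hc | hc
  · refine Finset.sum_congr rfl fun i hi => ?_
    rw [Finset.mem_filter] at hi
    have hi2 : (i : ℕ) + 1 < j := hi.2
    rw [← map_mul, ← map_mul]
    congr 1
    exact swap_comm_of_ne (by simp [hKdef, Fin.ext_iff]; omega)
      (by simp [hKdef, Fin.ext_iff]; omega)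
      (by simp [hK'def, Fin.ext_iff]; omega)
      (by simp [hK'def, Fin.ext_iff]; omega)
  · set A : Fin n := ⟨j - 1, hA⟩ with hAdef
    have hAK : A ≠ K := by simp [hAdef, hKdef, Fin.ext_iff]; omega
    have hAK' : A ≠ K' := by simp [hAdef, hK'def, Fin.ext_iff]; omega
    have key : ∀ i : Fin n, Equiv.swap K K' * Equiv.swap i A
        = Equiv.swap (Equiv.swap K K' i) A * Equiv.swap K K' := by
      intro i
      have hfix : Equiv.swap K K' A = A := Equiv.swap_apply_of_ne_of_ne hAK hAK'
      have := Equiv.swap_apply_apply (Equiv.swap K K') i A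
      rw [hfix] at this
      rw [this, inv_mul_cancel_right]
    have hmem : ∀ i : Fin n, ((Equiv.swap K K' i : Fin n) : ℕ) + 1 < j ↔ (i : ℕ) + 1 < j := by
      intro i
      rcases eq_or_ne i K with rfl | hiK
      · rw [Equiv.swap_apply_left]
        exact (by omega : t + 1 + 1 < j ↔ t + 1 < j)
      rcases eq_or_ne i K' with rfl | hiK'
      · rw [Equiv.swap_apply_right]
        exact (by omega : t + 1 < j ↔ t + 1 + 1 < j)
      · rw [Equiv.swap_apply_of_ne_of_ne hiK hiK']
    have hstep : ∀ i ∈ Finset.univ.filter (fun i : Fin n => (i : ℕ) + 1 < j),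
        ε n (Equiv.swap K K') * ε n (Equiv.swap i A)
          = ε n (Equiv.swap (Equiv.swap K K' i) A) * ε n (Equiv.swap K K') :=
      fun i _ => by rw [← map_mul, key i, map_mul]
    rw [Finset.sum_congr rfl hstep, ← Finset.sum_mul, ← Finset.sum_mul]
    congr 1
    refine Finset.sum_equiv (Equiv.swap K K') (fun i => ?_) (fun i _ => rfl)
    simp only [Finset.mem_filter, Finset.mem_univ, true_and]
    exact (hmem i).symm

lemma jm_one (n : ℕ) (hn : 1 ≤ n) : jucysMurphy n 1 = 0 := by
  rw [jm_eq n 1 le_rfl hn]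
  convert Finset.sum_empty
  ext i
  simp

lemma jm_gen (m n t : ℕ) (htn : t + 1 < n) (p : t < n) :
    ε n (Equiv.swap ⟨t, p⟩ ⟨t+1, htn⟩) * (∑ j ∈ Finset.Icc 1 n, jucysMurphy n j ^ m)
      = (∑ j ∈ Finset.Icc 1 n, jucysMurphy n j ^ m)
        * ε n (Equiv.swap ⟨t, p⟩ ⟨t+1, htn⟩) := by
  rw [← sub_eq_zero, Finset.mul_sum, Finset.sum_mul, ← Finset.sum_sub_distrib]
  have hzero : ∀ j ∈ Finset.Icc 1 n, j ∉ ({t+1, t+2} : Finset ℕ) →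
      ε n (Equiv.swap ⟨t, p⟩ ⟨t+1, htn⟩) * jucysMurphy n j ^ m
        - jucysMurphy n j ^ m * ε n (Equiv.swap ⟨t, p⟩ ⟨t+1, htn⟩) = 0 := by
    intro j hj hj'
    rw [Finset.mem_Icc] at hj
    rw [Finset.mem_insert, Finset.mem_singleton] at hj'
    push_neg at hj'
    have hcomm : Commute (ε n (Equiv.swap ⟨t, p⟩ ⟨t+1, htn⟩)) (jucysMurphy n j) :=
      jm_other n t j htn p hj.1 hj.2 hj'.1 hj'.2
    rw [(hcomm.pow_right m).eq, sub_self]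
  have hsub : ({t+1, t+2} : Finset ℕ) ⊆ Finset.Icc 1 n := by
    intro x hx
    rw [Finset.mem_insert, Finset.mem_singleton] at hx
    rcases hx with rfl | rfl <;> rw [Finset.mem_Icc] <;> omega
  rw [← Finset.sum_subset hsub hzero, Finset.sum_pair (by omega : t+1 ≠ t+2)]
  have hc := central_pair (ε n (Equiv.swap ⟨t, p⟩ ⟨t+1, htn⟩))
    (jucysMurphy n (t+1)) (jucysMurphy n (t+2))
    (jm_rel1 n t htn p) (jm_rel2 n t htn p) (jm_comm n t htn) m
  rw [mul_add, add_mul] at hc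
  rw [sub_add_sub_comm, hc, sub_self]

/-- For every `m ≥ 1` and `n ≥ 2`, the power sum `∑_{j=2}^{n} m(j)^m` of the
Jucys–Murphy elements lies in the center of the group algebra `ℂ[Sₙ]`. -/
theorem sum_pow_jucysMurphy_mem_center (m n : ℕ) (hm : 1 ≤ m) (hn : 2 ≤ n) :
    (∑ j ∈ Finset.Icc 2 n, jucysMurphy n j ^ m) ∈
      Subalgebra.center ℂ (MonoidAlgebra ℂ (Equiv.Perm (Fin n))) := by
  rw [Subalgebra.mem_center_iff]
  have hS : (∑ j ∈ Finset.Icc 2 n, jucysMurphy n j ^ m)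
      = ∑ j ∈ Finset.Icc 1 n, jucysMurphy n j ^ m := by
    rw [show Finset.Icc 1 n = insert 1 (Finset.Icc 2 n) by
        ext x; rw [Finset.mem_insert, Finset.mem_Icc, Finset.mem_Icc]; omega,
      Finset.sum_insert (by simp), jm_one n (by omega),
      zero_pow (by omega : m ≠ 0), zero_add]
  rw [hS]
  suffices h : ∀ g : Equiv.Perm (Fin n),
      ε n g * (∑ j ∈ Finset.Icc 1 n, jucysMurphy n j ^ m)
        = (∑ j ∈ Finset.Icc 1 n, jucysMurphy n j ^ m) * ε n g by
    intro b
    induction b using MonoidAlgebra.induction_on with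
    | of g => exact h g
    | add f g hf hg => rw [add_mul, mul_add, hf, hg]
    | smul r f hf => rw [smul_mul_assoc, mul_smul_comm, hf]
  obtain ⟨n', rfl⟩ : ∃ n', n = n' + 1 := ⟨n - 1, by omega⟩
  intro g
  have hg : g ∈ Submonoid.closure
      (Set.range fun i : Fin n' => Equiv.swap i.castSucc i.succ) := by
    rw [Equiv.Perm.mclosure_swap_castSucc_succ]
    exact Submonoid.mem_top g
  induction hg using Submonoid.closure_induction with
  | one => rw [map_one, one_mul, mul_one]
  | mul f g' hf hg' ihf ihg' => rw [map_mul, mul_assoc, ihg', ← mul_assoc, ihf, mul_assoc]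
  | mem f hf =>
    obtain ⟨k, rfl⟩ := hf
    have hk1 : (k : ℕ) + 1 < n' + 1 := by omega
    have hk0 : (k : ℕ) < n' + 1 := by omega
    have hcast : Equiv.swap k.castSucc k.succ
        = Equiv.swap (⟨(k : ℕ), hk0⟩ : Fin (n' + 1)) ⟨(k : ℕ) + 1, hk1⟩ := by
      rfl
    have h2 := jm_gen m (n' + 1) (k : ℕ) hk1 hk0
    rw [← hcast] at h2
    exact h2
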